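/- Remaining-horizon bound: for any integer H ≥ 3, any integer h with 1 ≤ h ≤ H/2, and any real p with 0 < p ≤ 4/(3H), it holds that (1 − (1−p)^{H−h})/p + (1−p)^{H−h} ≥ H/3. -/

import Mathlib

/-- Second-order Bernoulli-type bound: `(1-p)^m (1 + mp + m(m-1)p²/2) ≤ 1`. -/
lemma statement10_aux (p : ℝ) (hp0 : 0 ≤ p) (hp1 : p ≤ 1) :
    ∀ m : ℕ, (1 - p) ^ m * (1 + (m : ℝ) * p + (m : ℝ) * ((m : ℝ) - 1) * p ^ 2 / 2) ≤ 1 := by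
  intro m
  induction m with
  | zero => norm_num
  | succ k ih =>
    have hq : (0:ℝ) ≤ 1 - p := by linarith
    have hk : (0:ℝ) ≤ (k : ℝ) := Nat.cast_nonneg k
    have key : (1 - p) * (1 + ((k:ℝ) + 1) * p + ((k:ℝ) + 1) * (((k:ℝ) + 1) - 1) * p ^ 2 / 2)
        ≤ 1 + (k:ℝ) * p + (k:ℝ) * ((k:ℝ) - 1) * p ^ 2 / 2 := by
      nlinarith [sq_nonneg p, mul_nonneg (mul_nonneg hk hp0) (sq_nonneg p),
        mul_nonneg hp0 (sq_nonneg p)]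
    have h1 : (1 - p) ^ (k + 1) * (1 + ((k:ℝ) + 1) * p + ((k:ℝ) + 1) * (((k:ℝ) + 1) - 1) * p ^ 2 / 2)
        = (1 - p) ^ k * ((1 - p) * (1 + ((k:ℝ) + 1) * p + ((k:ℝ) + 1) * (((k:ℝ) + 1) - 1) * p ^ 2 / 2)) := by
      ring
    push_cast
    rw [h1]
    calc (1 - p) ^ k * ((1 - p) * (1 + ((k:ℝ) + 1) * p + ((k:ℝ) + 1) * (((k:ℝ) + 1) - 1) * p ^ 2 / 2))
        ≤ (1 - p) ^ k * (1 + (k:ℝ) * p + (k:ℝ) * ((k:ℝ) - 1) * p ^ 2 / 2) := by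
          exact mul_le_mul_of_nonneg_left key (pow_nonneg hq k)
      _ ≤ 1 := ih

set_option maxHeartbeats 1000000 in
/-- Remaining-horizon bound in the hard-to-learn episodic MDP construction. -/
theorem statement10 (H h : ℕ) (hH : 3 ≤ H) (hh1 : 1 ≤ h) (hh2 : h ≤ H / 2)
    (p : ℝ) (hp0 : 0 < p) (hp : p ≤ 4 / (3 * (H : ℝ))) :
    (H : ℝ) / 3 ≤ (1 - (1 - p) ^ (H - h)) / p + (1 - p) ^ (H - h) := by
  have hHR : (3:ℝ) ≤ (H:ℝ) := by exact_mod_cast hH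
  have hHpos : (0:ℝ) < (H:ℝ) := by linarith
  have hpH : p * (H:ℝ) ≤ 4 / 3 := by
    have h3 : (0:ℝ) < 3 * (H:ℝ) := by positivity
    have h4 := (le_div_iff₀ h3).mp hp
    nlinarith
  have hp1 : p ≤ 1 := by nlinarith
  have hq0 : (0:ℝ) ≤ 1 - p := by linarith
  -- cast facts about n = H - h
  set n : ℕ := H - h with hn
  have hhH : h ≤ H := le_trans hh2 (Nat.div_le_self H 2)
  have hnc : (n:ℝ) = (H:ℝ) - (h:ℝ) := by
    rw [hn]; push_cast [Nat.cast_sub hhH]; ring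
  have hhR : (h:ℝ) ≤ (H:ℝ) / 2 := by
    have h1 : (h:ℝ) ≤ ((H / 2 : ℕ) : ℝ) := by exact_mod_cast hh2
    have h2 : ((H / 2 : ℕ) : ℝ) ≤ (H:ℝ) / 2 := Nat.cast_div_le
    linarith
  have hnR : (H:ℝ) / 2 ≤ (n:ℝ) := by rw [hnc]; linarith
  set m : ℕ := n + 1 with hm
  have hmR : (H:ℝ) / 2 + 1 ≤ (m:ℝ) := by
    rw [hm]; push_cast; linarith
  -- rewrite goal as (1 - (1-p)^m)/p
  have hkey : (1 - (1 - p) ^ n) / p + (1 - p) ^ n = (1 - (1 - p) ^ m) / p := by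
    rw [hm, pow_succ]
    field_simp
    ring
  rw [hkey, le_div_iff₀ hp0]
  -- make everything opaque real arithmetic
  have haux := statement10_aux p (le_of_lt hp0) hp1 m
  have hqm : (0:ℝ) ≤ (1 - p) ^ m := pow_nonneg hq0 m
  obtain ⟨M, hM⟩ : ∃ M : ℝ, (m:ℝ) = M := ⟨_, rfl⟩
  obtain ⟨Q, hQm⟩ : ∃ Q : ℝ, (1 - p) ^ m = Q := ⟨_, rfl⟩
  rw [hM] at haux hmR
  rw [hQm] at haux hqm ⊢
  have hM1 : (1:ℝ) ≤ M := by linarith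
  have hMM : (0:ℝ) ≤ M * (M - 1) := mul_nonneg (by linarith) (by linarith)
  obtain ⟨D, hD⟩ : ∃ D : ℝ, 1 + M * p + M * (M - 1) * p ^ 2 / 2 = D := ⟨_, rfl⟩
  rw [hD] at haux
  have hDpos : (0:ℝ) < D := by
    rw [← hD]
    nlinarith [mul_nonneg (by linarith : (0:ℝ) ≤ M) hp0.le,
      mul_nonneg hMM (sq_nonneg p)]
  have hinv : Q ≤ 1 / D := by
    rw [le_div_iff₀ hDpos]; exact haux
  -- facts for the polynomial inequality
  have hA : (0:ℝ) ≤ M - (H:ℝ)/2 - 1 := by linarith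
  have hB : (0:ℝ) ≤ 4 - 3 * (p * (H:ℝ)) := by linarith
  have hQpoly : (0:ℝ) ≤ 5/3 * M * (H:ℝ) - (H:ℝ)^2 + 10/9 * (M * (M - 1)) := by
    nlinarith [mul_nonneg hA hA, mul_nonneg hA hHpos.le, hA]
  -- main polynomial inequality: H * D ≤ 3 * (M + M*(M-1)*p/2)
  have hpoly : (H:ℝ) * D ≤ 3 * (M + M * (M - 1) * p / 2) := by
    rw [← hD]
    have t1 : (0:ℝ) ≤ (H:ℝ) * ((4 - 3 * (p * (H:ℝ))) * (3 * M - (H:ℝ))) :=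
      mul_nonneg hHpos.le (mul_nonneg hB (by linarith))
    have t2 : (0:ℝ) ≤ p * ((H:ℝ) * (5/3 * M * (H:ℝ) - (H:ℝ)^2 + 10/9 * (M * (M - 1)))) :=
      mul_nonneg hp0.le (mul_nonneg hHpos.le hQpoly)
    have t3 : (0:ℝ) ≤ (p * (4 - 3 * (p * (H:ℝ)))) * ((H:ℝ) * (M * (M - 1))) :=
      mul_nonneg (mul_nonneg hp0.le hB) (mul_nonneg hHpos.le hMM)
    have hT : (0:ℝ) ≤ (H:ℝ) * (3 * (M + M * (M - 1) * p / 2)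
        - (H:ℝ) * (1 + M * p + M * (M - 1) * p ^ 2 / 2)) := by linarith [t1, t2, t3]
    have hT2 := (mul_le_mul_iff_right₀ hHpos).mp (by linarith : (H:ℝ) * 0 ≤ (H:ℝ) *
        (3 * (M + M * (M - 1) * p / 2) - (H:ℝ) * (1 + M * p + M * (M - 1) * p ^ 2 / 2)))
    linarith [hT2]
  -- multiply by p : H * p * D ≤ 3 * (D - 1)
  have h5 : (H:ℝ) * p * D ≤ 3 * (D - 1) := by
    have h6 := mul_le_mul_of_nonneg_left hpoly hp0.le
    have h7 : p * (3 * (M + M * (M - 1) * p / 2)) = 3 * (D - 1) := by rw [← hD]; ring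
    nlinarith [h6, h7.ge, h7.le]
  have h9 : 1 / D ≤ 1 - (H:ℝ) / 3 * p := by
    rw [div_le_iff₀ hDpos]
    nlinarith [h5]
  linarith [hinv, h9]
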